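/- Let h₁, h₂ ∈ ℂ^M be linearly independent, σ² > 0, r₁, r₂ > 0, and sin²α = 1 − |h₁ᴴh₂|²/(‖h₁‖²‖h₂‖²) > 0. Consider the feasible set of beamformer pairs (w₁,w₂) ∈ ℂ^M × ℂ^M satisfying |h₁ᴴw₁|² ≥ r₁σ², |h₂ᴴw₂|² ≥ r₂σ², h₁ᴴw₂ = 0, and h₂ᴴw₁ = 0. Then the minimum of ‖w₁‖² + ‖w₂‖² over this feasible set equals (σ²/sin²α)(r₁/‖h₁‖² + r₂/‖h₂‖²), attained by w₁* = σ√r₁·a₁/(‖h₁‖²‖h₂‖²sin²α) and w₂* = σ√r₂·a₂/(‖h₁‖²‖h₂‖²sin²α), where a₁ = ‖h₂‖²h₁ − (h₂ᴴh₁)h₂ and a₂ = ‖h₁‖²h₂ − (h₁ᴴh₂)h₁. -/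

import Mathlib

open scoped InnerProductSpace

lemma rc_cast (x : ℝ) : (RCLike.ofReal x : ℂ) = Complex.ofReal x := rfl

variable {E : Type*} [NormedAddCommGroup E] [InnerProductSpace ℂ E]

lemma aux_inner_k (h k : E) :
    ⟪k, ((‖k‖ ^ 2 : ℝ) : ℂ) • h - ⟪k, h⟫_ℂ • k⟫_ℂ = 0 := by
  simp only [inner_sub_right, inner_smul_right, inner_self_eq_norm_sq_to_K, rc_cast]
  push_cast
  ring

lemma aux_inner_h (h k : E) :
    ⟪h, ((‖k‖ ^ 2 : ℝ) : ℂ) • h - ⟪k, h⟫_ℂ • k⟫_ℂ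
      = ((‖h‖ ^ 2 * ‖k‖ ^ 2 - ‖⟪h, k⟫_ℂ‖ ^ 2 : ℝ) : ℂ) := by
  have hc : (starRingEnd ℂ) ⟪h, k⟫_ℂ * ⟪h, k⟫_ℂ = ((‖⟪h, k⟫_ℂ‖ ^ 2 : ℝ) : ℂ) := by
    rw [RCLike.conj_mul, rc_cast]; push_cast; ring
  simp only [inner_sub_right, inner_smul_right, inner_self_eq_norm_sq_to_K, rc_cast]
  rw [← inner_conj_symm k h, hc]
  push_cast
  ring

lemma aux_norm_a (h k : E) (a : E) (ha : a = ((‖k‖ ^ 2 : ℝ) : ℂ) • h - ⟪k, h⟫_ℂ • k) :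
    ‖a‖ ^ 2 = ‖k‖ ^ 2 * (‖h‖ ^ 2 * ‖k‖ ^ 2 - ‖⟪h, k⟫_ℂ‖ ^ 2) := by
  have ihA : ⟪h, a⟫_ℂ = ((‖h‖ ^ 2 * ‖k‖ ^ 2 - ‖⟪h, k⟫_ℂ‖ ^ 2 : ℝ) : ℂ) := by
    rw [ha]; exact aux_inner_h h k
  have ikA : ⟪k, a⟫_ℂ = 0 := by rw [ha]; exact aux_inner_k h k
  have h1 : ⟪a, a⟫_ℂ = ((‖k‖ ^ 2 * (‖h‖ ^ 2 * ‖k‖ ^ 2 - ‖⟪h, k⟫_ℂ‖ ^ 2) : ℝ) : ℂ) := by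
    nth_rewrite 1 [ha]
    rw [inner_sub_left, inner_smul_left, inner_smul_left, ihA, ikA]
    simp [Complex.conj_ofReal]
  have h2 : ((‖a‖ ^ 2 : ℝ) : ℂ) = ((‖k‖ ^ 2 * (‖h‖ ^ 2 * ‖k‖ ^ 2 - ‖⟪h, k⟫_ℂ‖ ^ 2) : ℝ) : ℂ) := by
    rw [← h1, inner_self_eq_norm_sq_to_K, rc_cast]
    push_cast
    ring
  exact_mod_cast h2

lemma aux_lb (h k w : E) (ho : ⟪k, w⟫_ℂ = 0) :
    ‖k‖ ^ 2 * (‖k‖ ^ 2 * ‖⟪h, w⟫_ℂ‖ ^ 2)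
      ≤ ‖k‖ ^ 2 * ((‖h‖ ^ 2 * ‖k‖ ^ 2 - ‖⟪h, k⟫_ℂ‖ ^ 2) * ‖w‖ ^ 2) := by
  set a : E := ((‖k‖ ^ 2 : ℝ) : ℂ) • h - ⟪k, h⟫_ℂ • k with ha
  have h1 : ⟪a, w⟫_ℂ = ((‖k‖ ^ 2 : ℝ) : ℂ) * ⟪h, w⟫_ℂ := by
    rw [ha, inner_sub_left, inner_smul_left, inner_smul_left, ho]
    simp [Complex.conj_ofReal]
  have h2 : ‖⟪a, w⟫_ℂ‖ ≤ ‖a‖ * ‖w‖ := norm_inner_le_norm a w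
  have h3 : ‖⟪a, w⟫_ℂ‖ = ‖k‖ ^ 2 * ‖⟪h, w⟫_ℂ‖ := by
    rw [h1, norm_mul, Complex.norm_real, Real.norm_eq_abs, abs_of_nonneg (sq_nonneg ‖k‖)]
  have h4 : (‖k‖ ^ 2 * ‖⟪h, w⟫_ℂ‖) ^ 2 ≤ ‖a‖ ^ 2 * ‖w‖ ^ 2 := by
    rw [← h3, ← mul_pow]
    exact pow_le_pow_left₀ (norm_nonneg _) h2 2
  rw [aux_norm_a h k a ha] at h4
  nlinarith [h4]

set_option maxHeartbeats 1000000 in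
/-- Lemma 3 of the paper: the zero-forcing beamforming power-minimization problem with QoS
constraints has minimum value `P^ZFBF = (σ²/sin²α)(r₁/‖h₁‖² + r₂/‖h₂‖²)`, attained by the
closed-form Moore–Penrose beamformers `w₁*, w₂*`. -/
theorem stmt_12 (M : ℕ) (h₁ h₂ : EuclideanSpace ℂ (Fin M))
    (hind : LinearIndependent ℂ ![h₁, h₂])
    (σ r₁ r₂ : ℝ) (hσ : 0 < σ) (hr₁ : 0 < r₁) (hr₂ : 0 < r₂)
    (s : ℝ) (hs : s = 1 - ‖⟪h₁, h₂⟫_ℂ‖ ^ 2 / (‖h₁‖ ^ 2 * ‖h₂‖ ^ 2)) (hspos : 0 < s)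
    (a₁ a₂ w₁ w₂ : EuclideanSpace ℂ (Fin M))
    (ha₁ : a₁ = ((‖h₂‖ ^ 2 : ℝ) : ℂ) • h₁ - ⟪h₂, h₁⟫_ℂ • h₂)
    (ha₂ : a₂ = ((‖h₁‖ ^ 2 : ℝ) : ℂ) • h₂ - ⟪h₁, h₂⟫_ℂ • h₁)
    (hw₁ : w₁ = ((σ * Real.sqrt r₁ / (‖h₁‖ ^ 2 * ‖h₂‖ ^ 2 * s) : ℝ) : ℂ) • a₁)
    (hw₂ : w₂ = ((σ * Real.sqrt r₂ / (‖h₁‖ ^ 2 * ‖h₂‖ ^ 2 * s) : ℝ) : ℂ) • a₂) :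
    IsLeast
      ((fun w : EuclideanSpace ℂ (Fin M) × EuclideanSpace ℂ (Fin M) =>
          ‖w.1‖ ^ 2 + ‖w.2‖ ^ 2) ''
        {w : EuclideanSpace ℂ (Fin M) × EuclideanSpace ℂ (Fin M) |
          r₁ * σ ^ 2 ≤ ‖⟪h₁, w.1⟫_ℂ‖ ^ 2 ∧ r₂ * σ ^ 2 ≤ ‖⟪h₂, w.2⟫_ℂ‖ ^ 2 ∧
          ⟪h₁, w.2⟫_ℂ = 0 ∧ ⟪h₂, w.1⟫_ℂ = 0})
      ((σ ^ 2 / s) * (r₁ / ‖h₁‖ ^ 2 + r₂ / ‖h₂‖ ^ 2)) ∧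
    (r₁ * σ ^ 2 ≤ ‖⟪h₁, w₁⟫_ℂ‖ ^ 2 ∧ r₂ * σ ^ 2 ≤ ‖⟪h₂, w₂⟫_ℂ‖ ^ 2 ∧
      ⟪h₁, w₂⟫_ℂ = 0 ∧ ⟪h₂, w₁⟫_ℂ = 0) ∧
    ‖w₁‖ ^ 2 + ‖w₂‖ ^ 2 = (σ ^ 2 / s) * (r₁ / ‖h₁‖ ^ 2 + r₂ / ‖h₂‖ ^ 2) := by
  -- basic positivity facts
  have hne₁ : h₁ ≠ 0 := by simpa using hind.ne_zero 0
  have hne₂ : h₂ ≠ 0 := by simpa using hind.ne_zero 1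
  have hn₁ : (0:ℝ) < ‖h₁‖ ^ 2 := pow_pos (norm_pos_iff.mpr hne₁) 2
  have hn₂ : (0:ℝ) < ‖h₂‖ ^ 2 := pow_pos (norm_pos_iff.mpr hne₂) 2
  have hn₁' : ‖h₁‖ ≠ 0 := norm_ne_zero_iff.mpr hne₁
  have hn₂' : ‖h₂‖ ≠ 0 := norm_ne_zero_iff.mpr hne₂
  have hs' : s ≠ 0 := ne_of_gt hspos
  have hp : ‖h₁‖ ^ 2 * ‖h₂‖ ^ 2 - ‖⟪h₁, h₂⟫_ℂ‖ ^ 2 = ‖h₁‖ ^ 2 * ‖h₂‖ ^ 2 * s := by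
    rw [hs]; field_simp
  have hpsym : ‖⟪h₂, h₁⟫_ℂ‖ = ‖⟪h₁, h₂⟫_ℂ‖ := norm_inner_symm h₂ h₁
  have hsq1 : Real.sqrt r₁ ^ 2 = r₁ := Real.sq_sqrt hr₁.le
  have hsq2 : Real.sqrt r₂ ^ 2 = r₂ := Real.sq_sqrt hr₂.le
  -- zero-forcing of the optimal beamformers
  have hz₁ : ⟪h₂, w₁⟫_ℂ = 0 := by
    rw [hw₁, inner_smul_right, ha₁, aux_inner_k h₁ h₂, mul_zero]
  have hz₂ : ⟪h₁, w₂⟫_ℂ = 0 := by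
    rw [hw₂, inner_smul_right, ha₂, aux_inner_k h₂ h₁, mul_zero]
  -- inner products of the optimal beamformers
  have hi₁ : ⟪h₁, w₁⟫_ℂ = ((σ * Real.sqrt r₁ : ℝ) : ℂ) := by
    rw [hw₁, inner_smul_right, ha₁, aux_inner_h h₁ h₂, hp]
    rw [← Complex.ofReal_mul]
    congr 1
    field_simp
  have hi₂ : ⟪h₂, w₂⟫_ℂ = ((σ * Real.sqrt r₂ : ℝ) : ℂ) := by
    rw [hw₂, inner_smul_right, ha₂, aux_inner_h h₂ h₁, hpsym]
    rw [show ‖h₂‖ ^ 2 * ‖h₁‖ ^ 2 - ‖⟪h₁, h₂⟫_ℂ‖ ^ 2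
        = ‖h₁‖ ^ 2 * ‖h₂‖ ^ 2 * s by rw [← hp]; ring]
    rw [← Complex.ofReal_mul]
    congr 1
    field_simp
  have hqos₁ : r₁ * σ ^ 2 ≤ ‖⟪h₁, w₁⟫_ℂ‖ ^ 2 := by
    rw [hi₁, Complex.norm_real, Real.norm_eq_abs, sq_abs, mul_pow, hsq1]
    nlinarith
  have hqos₂ : r₂ * σ ^ 2 ≤ ‖⟪h₂, w₂⟫_ℂ‖ ^ 2 := by
    rw [hi₂, Complex.norm_real, Real.norm_eq_abs, sq_abs, mul_pow, hsq2]
    nlinarith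
  -- norms of the optimal beamformers
  have hnw₁ : ‖w₁‖ ^ 2 = r₁ * σ ^ 2 / (‖h₁‖ ^ 2 * s) := by
    rw [hw₁, norm_smul, mul_pow, Complex.norm_real, Real.norm_eq_abs, sq_abs,
      aux_norm_a h₁ h₂ a₁ ha₁, hp, div_pow, mul_pow, mul_pow, hsq1]
    field_simp
  have hnw₂ : ‖w₂‖ ^ 2 = r₂ * σ ^ 2 / (‖h₂‖ ^ 2 * s) := by
    rw [hw₂, norm_smul, mul_pow, Complex.norm_real, Real.norm_eq_abs, sq_abs,
      aux_norm_a h₂ h₁ a₂ ha₂, hpsym,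
      show ‖h₂‖ ^ 2 * ‖h₁‖ ^ 2 - ‖⟪h₁, h₂⟫_ℂ‖ ^ 2
        = ‖h₁‖ ^ 2 * ‖h₂‖ ^ 2 * s by rw [← hp]; ring,
      div_pow, mul_pow, mul_pow, hsq2]
    field_simp
  have hsum : ‖w₁‖ ^ 2 + ‖w₂‖ ^ 2 = (σ ^ 2 / s) * (r₁ / ‖h₁‖ ^ 2 + r₂ / ‖h₂‖ ^ 2) := by
    rw [hnw₁, hnw₂]; field_simp
  refine ⟨⟨⟨(w₁, w₂), ⟨hqos₁, hqos₂, hz₂, hz₁⟩, hsum⟩, ?_⟩, ⟨hqos₁, hqos₂, hz₂, hz₁⟩, hsum⟩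
  rintro x ⟨w, ⟨hf₁, hf₂, hf₃, hf₄⟩, rfl⟩
  simp only
  -- lower bounds for each component
  have L1 := aux_lb h₁ h₂ w.1 hf₄
  have L2 := aux_lb h₂ h₁ w.2 hf₃
  rw [hp] at L1
  rw [hpsym, show ‖h₂‖ ^ 2 * ‖h₁‖ ^ 2 - ‖⟪h₁, h₂⟫_ℂ‖ ^ 2
        = ‖h₁‖ ^ 2 * ‖h₂‖ ^ 2 * s by rw [← hp]; ring] at L2
  have c1 : ‖h₂‖ ^ 2 * ‖⟪h₁, w.1⟫_ℂ‖ ^ 2 ≤ ‖h₁‖ ^ 2 * ‖h₂‖ ^ 2 * s * ‖w.1‖ ^ 2 := by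
    exact le_of_mul_le_mul_left L1 hn₂
  have c2 : ‖h₁‖ ^ 2 * ‖⟪h₂, w.2⟫_ℂ‖ ^ 2 ≤ ‖h₁‖ ^ 2 * ‖h₂‖ ^ 2 * s * ‖w.2‖ ^ 2 := by
    exact le_of_mul_le_mul_left L2 hn₁
  have b1 : r₁ * σ ^ 2 ≤ ‖w.1‖ ^ 2 * (‖h₁‖ ^ 2 * s) := by
    have d1 : ‖h₂‖ ^ 2 * (r₁ * σ ^ 2) ≤ ‖h₂‖ ^ 2 * (‖w.1‖ ^ 2 * (‖h₁‖ ^ 2 * s)) := by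
      have e1 : ‖h₂‖ ^ 2 * (r₁ * σ ^ 2) ≤ ‖h₂‖ ^ 2 * ‖⟪h₁, w.1⟫_ℂ‖ ^ 2 :=
        mul_le_mul_of_nonneg_left hf₁ hn₂.le
      have e2 : ‖h₁‖ ^ 2 * ‖h₂‖ ^ 2 * s * ‖w.1‖ ^ 2
          = ‖h₂‖ ^ 2 * (‖w.1‖ ^ 2 * (‖h₁‖ ^ 2 * s)) := by ring
      linarith [c1]
    exact le_of_mul_le_mul_left d1 hn₂
  have b2 : r₂ * σ ^ 2 ≤ ‖w.2‖ ^ 2 * (‖h₂‖ ^ 2 * s) := by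
    have d2 : ‖h₁‖ ^ 2 * (r₂ * σ ^ 2) ≤ ‖h₁‖ ^ 2 * (‖w.2‖ ^ 2 * (‖h₂‖ ^ 2 * s)) := by
      have e1 : ‖h₁‖ ^ 2 * (r₂ * σ ^ 2) ≤ ‖h₁‖ ^ 2 * ‖⟪h₂, w.2⟫_ℂ‖ ^ 2 :=
        mul_le_mul_of_nonneg_left hf₂ hn₁.le
      have e2 : ‖h₁‖ ^ 2 * ‖h₂‖ ^ 2 * s * ‖w.2‖ ^ 2
          = ‖h₁‖ ^ 2 * (‖w.2‖ ^ 2 * (‖h₂‖ ^ 2 * s)) := by ring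
      linarith [c2]
    exact le_of_mul_le_mul_left d2 hn₁
  have key : (σ ^ 2 / s) * (r₁ / ‖h₁‖ ^ 2 + r₂ / ‖h₂‖ ^ 2)
      = r₁ * σ ^ 2 / (‖h₁‖ ^ 2 * s) + r₂ * σ ^ 2 / (‖h₂‖ ^ 2 * s) := by
    field_simp
  rw [key]
  have g1 : r₁ * σ ^ 2 / (‖h₁‖ ^ 2 * s) ≤ ‖w.1‖ ^ 2 :=
    (div_le_iff₀ (by positivity)).mpr b1
  have g2 : r₂ * σ ^ 2 / (‖h₂‖ ^ 2 * s) ≤ ‖w.2‖ ^ 2 :=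
    (div_le_iff₀ (by positivity)).mpr b2
  linarith
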